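/- Let m₀ < 0, q : [0,T₁] → (0,1] continuous with q(0)=1, and let r : [0,T₁] → ℝ be C¹ with r(0) ≤ λ^{-1} (where 0 < λ < 1) and satisfying c₂ m₀ ≤ r'(t) ≤ c₁ m₀ for constants 0 < c₁ < c₂, together with q(t) ≤ r(t) ≤ λ^{-1} q(t) for all t. Then for s > 0, s ≠ 1: ∫₀^t q(τ)^{-s} dτ ≤ (1-s)^{-1} m₀^{-1} c₁^{-1} λ^{-s} [q(t)^{1-s} - λ^{s-1}]. -/

import Mathlib

open MeasureTheory

/-- Power-weight integral bound on `q`: under the comparison hypotheses on `r`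
and `q`, for `s > 0`, `s ≠ 1`,
`∫₀ᵗ q(τ)^{-s} dτ ≤ (1-s)⁻¹ m₀⁻¹ c₁⁻¹ λ^{-s} [q(t)^{1-s} - λ^{s-1}]`. -/
theorem stmt_8 (T₁ m₀ lam c₁ c₂ : ℝ) (hT : 0 ≤ T₁) (hm₀ : m₀ < 0)
    (hlam1 : 0 < lam) (hlam2 : lam < 1) (hc₁ : 0 < c₁) (hc₁₂ : c₁ < c₂)
    (q r r' : ℝ → ℝ)
    (hqcont : ContinuousOn q (Set.Icc 0 T₁))
    (hq0 : q 0 = 1) (hqpos : ∀ t ∈ Set.Icc 0 T₁, 0 < q t)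
    (hqle : ∀ t ∈ Set.Icc 0 T₁, q t ≤ 1)
    (hr0 : r 0 ≤ lam⁻¹)
    (hrderiv : ∀ t ∈ Set.Icc 0 T₁, HasDerivAt r (r' t) t)
    (hr'lb : ∀ t ∈ Set.Icc 0 T₁, c₂ * m₀ ≤ r' t)
    (hr'ub : ∀ t ∈ Set.Icc 0 T₁, r' t ≤ c₁ * m₀)
    (hcomp : ∀ t ∈ Set.Icc 0 T₁, q t ≤ r t ∧ r t ≤ lam⁻¹ * q t) :
    ∀ t ∈ Set.Icc 0 T₁, ∀ s : ℝ, 0 < s → s ≠ 1 →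
      (∫ τ in (0:ℝ)..t, (q τ) ^ (-s))
        ≤ (1 - s)⁻¹ * m₀⁻¹ * c₁⁻¹ * lam ^ (-s) * ((q t) ^ (1 - s) - lam ^ (s - 1)) := by
  intro t ht s hs hs1
  obtain ⟨ht0, htT⟩ := ht
  have htmem : t ∈ Set.Icc (0:ℝ) T₁ := ⟨ht0, htT⟩
  have h0mem : (0:ℝ) ∈ Set.Icc (0:ℝ) T₁ := ⟨le_rfl, hT⟩
  have hsub : Set.Icc (0:ℝ) t ⊆ Set.Icc 0 T₁ := Set.Icc_subset_Icc le_rfl htT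
  have huIcc : Set.uIcc (0:ℝ) t = Set.Icc 0 t := Set.uIcc_of_le ht0
  have hrpos : ∀ τ ∈ Set.Icc (0:ℝ) T₁, 0 < r τ := fun τ hτ =>
    lt_of_lt_of_le (hqpos τ hτ) (hcomp τ hτ).1
  have hrcont : ContinuousOn r (Set.Icc 0 T₁) := fun τ hτ =>
    ((hrderiv τ hτ).continuousAt).continuousWithinAt
  have hlams : (0:ℝ) < lam ^ (-s) := Real.rpow_pos_of_pos hlam1 _
  have hm₀ne : m₀ ≠ 0 := ne_of_lt hm₀
  have hc₁ne : c₁ ≠ 0 := ne_of_gt hc₁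
  have hinvneg : m₀⁻¹ * c₁⁻¹ < 0 :=
    mul_neg_of_neg_of_pos (inv_lt_zero.mpr hm₀) (inv_pos.mpr hc₁)
  set K : ℝ := m₀⁻¹ * c₁⁻¹ * lam ^ (-s) with hKdef
  have hKneg : K < 0 := mul_neg_of_neg_of_pos hinvneg hlams
  -- the function g = r^{-s} * r'
  set g : ℝ → ℝ := fun τ => r τ ^ (-s) * r' τ with hgdef
  -- pointwise bound: q^{-s} ≤ K * g on [0, t]
  have hpt : ∀ τ ∈ Set.Icc (0:ℝ) t, q τ ^ (-s) ≤ K * g τ := by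
    intro τ hτ
    have hτT := hsub hτ
    have hq : 0 < q τ := hqpos τ hτT
    have hr : 0 < r τ := hrpos τ hτT
    have hlr : lam * r τ ≤ q τ := by
      have h2 := (hcomp τ hτT).2
      have := mul_le_mul_of_nonneg_left h2 hlam1.le
      have hinv : lam * (lam⁻¹ * q τ) = q τ := by
        field_simp
      linarith [this, hinv ▸ this]
    have h1 : q τ ^ (-s) ≤ (lam * r τ) ^ (-s) :=
      Real.rpow_le_rpow_of_nonpos (mul_pos hlam1 hr) hlr (neg_nonpos.mpr hs.le)
    have h2 : (lam * r τ) ^ (-s) = lam ^ (-s) * r τ ^ (-s) :=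
      Real.mul_rpow hlam1.le hr.le
    have hrs : (0:ℝ) < r τ ^ (-s) := Real.rpow_pos_of_pos hr _
    -- 1 ≤ m₀⁻¹ * c₁⁻¹ * r' τ
    have hone : 1 ≤ m₀⁻¹ * c₁⁻¹ * r' τ := by
      have hub := hr'ub τ hτT
      have heq : m₀⁻¹ * c₁⁻¹ * (c₁ * m₀) = 1 := by field_simp
      nlinarith [mul_le_mul_of_nonpos_left hub hinvneg.le]
    calc q τ ^ (-s) ≤ lam ^ (-s) * r τ ^ (-s) := by rw [← h2]; exact h1
      _ ≤ lam ^ (-s) * r τ ^ (-s) * (m₀⁻¹ * c₁⁻¹ * r' τ) := by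
          nlinarith [mul_pos hlams hrs]
      _ = K * g τ := by rw [hKdef, hgdef]; ring
  -- integrability of q^{-s}
  have hqint : IntervalIntegrable (fun τ => q τ ^ (-s)) volume 0 t := by
    apply ContinuousOn.intervalIntegrable
    rw [huIcc]
    exact ContinuousOn.rpow_const (hqcont.mono hsub)
      (fun x hx => Or.inl (ne_of_gt (hqpos x (hsub hx))))
  -- integrability of g
  have hrscont : ContinuousOn (fun τ => r τ ^ (-s)) (Set.Icc 0 t) :=
    ContinuousOn.rpow_const ((hrcont.mono hsub))
      (fun x hx => Or.inl (ne_of_gt (hrpos x (hsub hx))))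
  have hgint : IntervalIntegrable g volume 0 t := by
    rw [intervalIntegrable_iff_integrableOn_Icc_of_le ht0]
    have hr'eq : ∀ τ ∈ Set.Icc (0:ℝ) t, deriv r τ = r' τ := fun τ hτ =>
      (hrderiv τ (hsub hτ)).deriv
    have hmeas : AEStronglyMeasurable g (volume.restrict (Set.Icc (0:ℝ) t)) := by
      have h1 : AEStronglyMeasurable (fun τ => r τ ^ (-s) * deriv r τ)
          (volume.restrict (Set.Icc (0:ℝ) t)) :=
        (hrscont.aestronglyMeasurable measurableSet_Icc).mul
          ((measurable_deriv r).aestronglyMeasurable.restrict)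
      apply h1.congr
      filter_upwards [ae_restrict_mem measurableSet_Icc] with τ hτ
      rw [hgdef]; simp only []; rw [hr'eq τ hτ]
    obtain ⟨C, hC⟩ := isCompact_Icc.exists_bound_of_continuousOn hrscont
    set C₂ : ℝ := max |c₁ * m₀| |c₂ * m₀| with hC₂
    refine (integrable_const (C * C₂)).mono' hmeas ?_
    filter_upwards [ae_restrict_mem measurableSet_Icc] with τ hτ
    have hb1 : ‖r τ ^ (-s)‖ ≤ C := hC τ hτ
    have hb2 : ‖r' τ‖ ≤ C₂ := by
      rw [Real.norm_eq_abs, abs_le]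
      constructor
      · have := hr'lb τ (hsub hτ)
        have : -(c₂ * m₀) ≤ |c₂ * m₀| := neg_le_abs _
        nlinarith [hr'lb τ (hsub hτ), neg_le_abs (c₂ * m₀), le_max_right |c₁ * m₀| |c₂ * m₀|]
      · nlinarith [hr'ub τ (hsub hτ), le_abs_self (c₁ * m₀), le_max_left |c₁ * m₀| |c₂ * m₀|]
    calc ‖g τ‖ = ‖r τ ^ (-s)‖ * ‖r' τ‖ := norm_mul _ _
      _ ≤ C * C₂ := mul_le_mul hb1 hb2 (norm_nonneg _) ((norm_nonneg _).trans hb1)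
  have hKgint : IntervalIntegrable (fun τ => K * g τ) volume 0 t := hgint.const_mul K
  -- integral monotonicity
  have hmono : (∫ τ in (0:ℝ)..t, q τ ^ (-s)) ≤ ∫ τ in (0:ℝ)..t, K * g τ :=
    intervalIntegral.integral_mono_on ht0 hqint hKgint hpt
  -- FTC
  have hs1' : (1:ℝ) - s ≠ 0 := sub_ne_zero.mpr (Ne.symm hs1)
  have hFTC : (∫ τ in (0:ℝ)..t, g τ)
      = (1 - s)⁻¹ * r t ^ (1 - s) - (1 - s)⁻¹ * r 0 ^ (1 - s) := by
    apply intervalIntegral.integral_eq_sub_of_hasDerivAt _ hgint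
    intro x hx
    rw [huIcc] at hx
    have hrx : r x ≠ 0 := ne_of_gt (hrpos x (hsub hx))
    have hd := ((hrderiv x (hsub hx)).rpow_const (p := 1 - s) (Or.inl hrx)).const_mul ((1 - s)⁻¹)
    convert hd using 1
    case e'_4 => rfl
    rw [hgdef]
    simp only []
    have : (1:ℝ) - s - 1 = -s := by ring
    rw [this]
    field_simp
  have hKg : (∫ τ in (0:ℝ)..t, K * g τ)
      = K * ((1 - s)⁻¹ * r t ^ (1 - s) - (1 - s)⁻¹ * r 0 ^ (1 - s)) := by
    rw [intervalIntegral.integral_const_mul, hFTC]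
  -- final comparison
  have hqt : 0 < q t := hqpos t htmem
  have hrt : q t ≤ r t := (hcomp t htmem).1
  have hr0pos : 0 < r 0 := hrpos 0 h0mem
  have hlaminv : (0:ℝ) < lam⁻¹ := inv_pos.mpr hlam1
  have hlsm : (lam⁻¹) ^ (1 - s) = lam ^ (s - 1) := by
    rw [Real.inv_rpow hlam1.le, ← Real.rpow_neg hlam1.le]
    ring_nf
  have hfinal : K * ((1 - s)⁻¹ * r t ^ (1 - s) - (1 - s)⁻¹ * r 0 ^ (1 - s))
      ≤ (1 - s)⁻¹ * m₀⁻¹ * c₁⁻¹ * lam ^ (-s) * (q t ^ (1 - s) - lam ^ (s - 1)) := by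
    have hRHS : (1 - s)⁻¹ * m₀⁻¹ * c₁⁻¹ * lam ^ (-s) * (q t ^ (1 - s) - lam ^ (s - 1))
        = K * ((1 - s)⁻¹ * (q t ^ (1 - s) - lam ^ (s - 1))) := by
      rw [hKdef]; ring
    rw [hRHS]
    have hLHS : K * ((1 - s)⁻¹ * r t ^ (1 - s) - (1 - s)⁻¹ * r 0 ^ (1 - s))
        = K * ((1 - s)⁻¹ * (r t ^ (1 - s) - r 0 ^ (1 - s))) := by ring
    rw [hLHS]
    rcases lt_or_gt_of_ne hs1 with hlt | hgt
    · -- s < 1 : 1 - s > 0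
      have h1s : (0:ℝ) < 1 - s := by linarith
      have ha : q t ^ (1 - s) ≤ r t ^ (1 - s) :=
        Real.rpow_le_rpow hqt.le hrt h1s.le
      have hb : r 0 ^ (1 - s) ≤ lam ^ (s - 1) := by
        rw [← hlsm]
        exact Real.rpow_le_rpow hr0pos.le hr0 h1s.le
      have hD : K * (1 - s)⁻¹ ≤ 0 :=
        (mul_nonpos_iff.mpr (Or.inr ⟨hKneg.le, (inv_pos.mpr h1s).le⟩))
      have hsub' : q t ^ (1 - s) - lam ^ (s - 1) ≤ r t ^ (1 - s) - r 0 ^ (1 - s) := by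
        linarith
      calc K * ((1 - s)⁻¹ * (r t ^ (1 - s) - r 0 ^ (1 - s)))
          = (K * (1 - s)⁻¹) * (r t ^ (1 - s) - r 0 ^ (1 - s)) := by ring
        _ ≤ (K * (1 - s)⁻¹) * (q t ^ (1 - s) - lam ^ (s - 1)) :=
            mul_le_mul_of_nonpos_left hsub' hD
        _ = K * ((1 - s)⁻¹ * (q t ^ (1 - s) - lam ^ (s - 1))) := by ring
    · -- s > 1 : 1 - s < 0
      have h1s : (1:ℝ) - s < 0 := by linarith
      have ha : r t ^ (1 - s) ≤ q t ^ (1 - s) :=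
        Real.rpow_le_rpow_of_nonpos hqt hrt h1s.le
      have hb : lam ^ (s - 1) ≤ r 0 ^ (1 - s) := by
        rw [← hlsm]
        exact Real.rpow_le_rpow_of_nonpos hr0pos hr0 h1s.le
      have hD : 0 ≤ K * (1 - s)⁻¹ :=
        le_of_lt (mul_pos_of_neg_of_neg hKneg (inv_lt_zero.mpr h1s))
      have hsub' : r t ^ (1 - s) - r 0 ^ (1 - s) ≤ q t ^ (1 - s) - lam ^ (s - 1) := by
        linarith
      calc K * ((1 - s)⁻¹ * (r t ^ (1 - s) - r 0 ^ (1 - s)))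
          = (K * (1 - s)⁻¹) * (r t ^ (1 - s) - r 0 ^ (1 - s)) := by ring
        _ ≤ (K * (1 - s)⁻¹) * (q t ^ (1 - s) - lam ^ (s - 1)) :=
            mul_le_mul_of_nonneg_left hsub' hD
        _ = K * ((1 - s)⁻¹ * (q t ^ (1 - s) - lam ^ (s - 1))) := by ring
  calc (∫ τ in (0:ℝ)..t, q τ ^ (-s)) ≤ ∫ τ in (0:ℝ)..t, K * g τ := hmono
    _ = K * ((1 - s)⁻¹ * r t ^ (1 - s) - (1 - s)⁻¹ * r 0 ^ (1 - s)) := hKg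
    _ ≤ _ := hfinal
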